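/- Let Δ be a fixed nondegenerate triangle, let σ be a fixed sphere in ℝ³ with center o, and let p ∈ ℝ³ with p ≠ o. There are at most two circles γ contained in σ that arise as γ_{pq} for some point q, where γ_{pq} is the circle of points r making triangle pqr similar to Δ with correspondence (p,q,r) ↔ (a,b,c). -/

import Mathlib

noncomputable section

open scoped RealInnerProductSpace

abbrev E3 := EuclideanSpace ℝ (Fin 3)

/-- The locus of apices `r` such that triangle `pqr` is similar to the triangle `abc`,
with the correspondence `(p,q,r) ↔ (a,b,c)`. -/
def simLocus (a b c p q : E3) : Set E3 :=
  {r | dist p q / dist a b = dist q r / dist b c ∧ dist p q / dist a b = dist r p / dist c a}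

lemma quad_encard {A B C : ℝ} (hA : A ≠ 0) :
    ({x : ℝ | A * x ^ 2 + B * x + C = 0}).encard ≤ 2 := by
  rcases Set.eq_empty_or_nonempty {x : ℝ | A * x ^ 2 + B * x + C = 0} with h | ⟨x₀, hx₀⟩
  · simp [h]
  · have hsub : {x : ℝ | A * x ^ 2 + B * x + C = 0} ⊆ {x₀, -B / A - x₀} := by
      intro t ht
      have h1 : A * t ^ 2 + B * t + C = 0 := ht
      have h2 : A * x₀ ^ 2 + B * x₀ + C = 0 := hx₀
      have h3 : (t - x₀) * (A * (t + x₀) + B) = 0 := by linear_combination h1 - h2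
      rcases mul_eq_zero.1 h3 with h | h
      · left; linarith
      · right
        show t = -B / A - x₀
        field_simp
        linarith
    refine le_trans (Set.encard_le_encard hsub) ?_
    refine le_trans (Set.encard_insert_le _ _) ?_
    rw [Set.encard_singleton]
    decide

lemma exists_unit_ortho (u : E3) (hu : u ≠ 0) : ∃ e : E3, ⟪u, e⟫ = 0 ∧ ‖e‖ = 1 := by
  have hne : ((ℝ ∙ u)ᗮ : Submodule ℝ E3) ≠ ⊥ := by
    intro hbot
    have h1 := Submodule.finrank_add_finrank_orthogonal (K := (ℝ ∙ u : Submodule ℝ E3))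
    rw [hbot, finrank_bot, finrank_span_singleton hu, finrank_euclideanSpace_fin] at h1
    omega
  obtain ⟨w, hw, hw0⟩ := Submodule.exists_mem_ne_zero_of_ne_bot hne
  refine ⟨(‖w‖⁻¹ : ℝ) • w, ?_, norm_smul_inv_norm hw0⟩
  rw [Submodule.mem_orthogonal_singleton_iff_inner_right] at hw
  rw [real_inner_smul_right, hw, mul_zero]

lemma inner_eq_zero_of_norms {R : ℝ} (X y : E3) (h1 : ‖X + y‖ = R) (h2 : ‖X - y‖ = R) :
    ⟪X, y⟫ = 0 := by
  have h : ‖X + y‖ ^ 2 = ‖X - y‖ ^ 2 := by rw [h1, h2]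
  rw [norm_add_sq_real, norm_sub_sq_real] at h
  linarith

lemma final_alg (ab bc ca d R D α μ t : ℝ)
    (h2 : ca ^ 2 - bc ^ 2 + ab ^ 2 = 2 * ab ^ 2 * α)
    (hD2 : D ^ 2 = (α - μ) ^ 2 * d ^ 2)
    (hR2 : R ^ 2 * ab ^ 2 = μ ^ 2 * d ^ 2 * ab ^ 2 + d ^ 2 * ca ^ 2 - α ^ 2 * d ^ 2 * ab ^ 2)
    (ht : t * (α - μ) = 1) :
    D ^ 2 * ca ^ 2 * t ^ 2 + -(D ^ 2 * (ca ^ 2 - bc ^ 2 + ab ^ 2)) * t +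
      ab ^ 2 * (D ^ 2 - R ^ 2) = 0 := by
  linear_combination (ca ^ 2 * t ^ 2 - (ca ^ 2 - bc ^ 2 + ab ^ 2) * t + ab ^ 2) * hD2
    + (-((α - μ) ^ 2 * d ^ 2 * t)) * h2
    + (d ^ 2 * ca ^ 2 * (t * (α - μ) + 1) - 2 * ab ^ 2 * α * d ^ 2 * (α - μ)) * ht
    + (-1 : ℝ) * hR2

lemma strict_tri {x y z : E3} (h : ¬ Collinear ℝ ({x, y, z} : Set E3)) :
    dist x z < dist x y + dist y z := by
  rcases lt_or_eq_of_le (dist_triangle x y z) with h' | h'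
  · exact h'
  · exact absurd (dist_add_dist_eq_iff.mp h'.symm).collinear h

set_option maxHeartbeats 2000000 in
lemma key_quadratic (a b c : E3) (hΔ : ¬ Collinear ℝ ({a, b, c} : Set E3))
    (o : E3) (R : ℝ) (p q : E3) (hp : p ≠ o) (hq : q ≠ p)
    (hsub : simLocus a b c p q ⊆ Metric.sphere o R) :
    ∃ t : ℝ, q = p + t • (o - p) ∧
      ‖o - p‖ ^ 2 * (dist c a) ^ 2 * t ^ 2 +
        (-(‖o - p‖ ^ 2 * ((dist c a) ^ 2 - (dist b c) ^ 2 + (dist a b) ^ 2))) * t +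
        (dist a b) ^ 2 * (‖o - p‖ ^ 2 - R ^ 2) = 0 := by
  -- distances are positive
  have hab : (0:ℝ) < dist a b := by
    rcases eq_or_ne a b with rfl | h
    · refine absurd ?_ hΔ
      have : ({a, a, c} : Set E3) = {a, c} := by ext x; simp; try tauto
      rw [this]; exact collinear_pair ℝ a c
    · exact dist_pos.2 h
  have hbc : (0:ℝ) < dist b c := by
    rcases eq_or_ne b c with rfl | h
    · refine absurd ?_ hΔ
      have : ({a, b, b} : Set E3) = {a, b} := by ext x; simp; try tauto
      rw [this]; exact collinear_pair ℝ a b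
    · exact dist_pos.2 h
  have hca : (0:ℝ) < dist c a := by
    rcases eq_or_ne c a with rfl | h
    · refine absurd ?_ hΔ
      have : ({c, b, c} : Set E3) = {c, b} := by ext x; simp; try tauto
      rw [this]; exact collinear_pair ℝ c b
    · exact dist_pos.2 h
  -- strict triangle inequalities
  have h1 : dist a b < dist c a + dist b c := by
    have h := strict_tri (x := a) (y := c) (z := b) (by
      intro hcol
      refine absurd ?_ hΔ
      have : ({a, c, b} : Set E3) = {a, b, c} := by ext x; simp; try tauto
      rwa [← this])
    rw [dist_comm a c, dist_comm c b] at h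
    linarith
  have h2 : dist b c < dist a b + dist c a := by
    have h := strict_tri (x := b) (y := a) (z := c) (by
      intro hcol
      refine absurd ?_ hΔ
      have : ({b, a, c} : Set E3) = {a, b, c} := by ext x; simp; try tauto
      rwa [← this])
    rw [dist_comm b a, dist_comm a c] at h
    linarith
  have h3 : dist c a < dist b c + dist a b := by
    have h := strict_tri (x := c) (y := b) (z := a) (by
      intro hcol
      refine absurd ?_ hΔ
      have : ({c, b, a} : Set E3) = {a, b, c} := by ext x; simp; try tauto
      rwa [← this])
    rw [dist_comm c b, dist_comm b a] at h
    linarith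
  set ab := dist a b with hab_def
  set bc := dist b c with hbc_def
  set ca := dist c a with hca_def
  set u : E3 := q - p with hu_def
  have hu : u ≠ 0 := sub_ne_zero.2 hq
  set d : ℝ := ‖u‖ with hd_def
  have hd : 0 < d := norm_pos_iff.2 hu
  set s : ℝ := d / ab with hs_def
  have hs : 0 < s := div_pos hd hab
  set α : ℝ := (ca ^ 2 - bc ^ 2 + ab ^ 2) / (2 * ab ^ 2) with hα_def
  have hP : 0 < (s * ca) ^ 2 - α ^ 2 * d ^ 2 := by
    have hfac : (s * ca) ^ 2 - α ^ 2 * d ^ 2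
        = d ^ 2 / (4 * ab ^ 4) *
          ((bc + ca - ab) * (bc + ab - ca) * (ab + ca - bc) * (ab + bc + ca)) := by
      rw [hs_def, hα_def]
      field_simp
      ring
    rw [hfac]
    have f1 : (0:ℝ) < bc + ca - ab := by linarith
    have f2 : (0:ℝ) < bc + ab - ca := by linarith
    have f3 : (0:ℝ) < ab + ca - bc := by linarith
    have f4 : (0:ℝ) < ab + bc + ca := by linarith
    positivity
  set ρ : ℝ := Real.sqrt ((s * ca) ^ 2 - α ^ 2 * d ^ 2) with hρ_def
  have hρ : 0 < ρ := Real.sqrt_pos.2 hP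
  have hρ2 : ρ ^ 2 = (s * ca) ^ 2 - α ^ 2 * d ^ 2 := Real.sq_sqrt hP.le
  have hpq : dist p q = d := by rw [dist_comm, dist_eq_norm, hd_def, hu_def]
  have hqpu : q = p + u := by rw [hu_def]; abel
  -- membership in the locus
  have hmem : ∀ w : E3, ⟪u, w⟫ = 0 → ‖w‖ = 1 → (p + α • u + ρ • w) ∈ simLocus a b c p q := by
    intro w hw hw1
    have hrp : dist (p + α • u + ρ • w) p = s * ca := by
      rw [dist_eq_norm]
      have hsub' : p + α • u + ρ • w - p = α • u + ρ • w := by abel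
      rw [hsub']
      have hsq : ‖α • u + ρ • w‖ ^ 2 = (s * ca) ^ 2 := by
        rw [norm_add_sq_real, real_inner_smul_left, real_inner_smul_right, hw,
          norm_smul, norm_smul, hw1, Real.norm_eq_abs, Real.norm_eq_abs]
        rw [mul_one, mul_pow, mul_pow, sq_abs, sq_abs]
        rw [hρ2]
        ring
      have h₂ : (0:ℝ) ≤ s * ca := by positivity
      calc ‖α • u + ρ • w‖ = Real.sqrt (‖α • u + ρ • w‖ ^ 2) := (Real.sqrt_sq (norm_nonneg _)).symm
        _ = Real.sqrt ((s * ca) ^ 2) := by rw [hsq]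
        _ = s * ca := Real.sqrt_sq h₂
    have hqr : dist q (p + α • u + ρ • w) = s * bc := by
      rw [dist_eq_norm]
      have hsub' : q - (p + α • u + ρ • w) = -((α - 1) • u + ρ • w) := by
        rw [hqpu, sub_smul, one_smul]; abel
      rw [hsub', norm_neg]
      have hsq : ‖(α - 1) • u + ρ • w‖ ^ 2 = (s * bc) ^ 2 := by
        rw [norm_add_sq_real, real_inner_smul_left, real_inner_smul_right, hw,
          norm_smul, norm_smul, hw1, Real.norm_eq_abs, Real.norm_eq_abs]
        rw [mul_one, mul_pow, mul_pow, sq_abs, sq_abs]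
        rw [hρ2]
        have hid : (α - 1) ^ 2 * d ^ 2 + ((s * ca) ^ 2 - α ^ 2 * d ^ 2) = (s * bc) ^ 2 := by
          rw [hs_def, hα_def]
          field_simp
          ring
        linarith [hid]
      have h₂ : (0:ℝ) ≤ s * bc := by positivity
      calc ‖(α - 1) • u + ρ • w‖ = Real.sqrt (‖(α - 1) • u + ρ • w‖ ^ 2) :=
            (Real.sqrt_sq (norm_nonneg _)).symm
        _ = Real.sqrt ((s * bc) ^ 2) := by rw [hsq]
        _ = s * bc := Real.sqrt_sq h₂
    constructor
    · rw [hpq, hqr, hs_def]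
      field_simp
      rw [hab_def, hbc_def]
      rw [← hab_def, ← hbc_def, div_self hab.ne', div_self hbc.ne']
    · rw [hpq, hrp, hs_def]
      field_simp
      rw [hab_def, hca_def]
      rw [← hab_def, ← hca_def, div_self hab.ne', div_self hca.ne']
  -- the center of the locus circle minus o is orthogonal to everything orthogonal to u
  have hkey : ∀ w : E3, ⟪u, w⟫ = 0 → ⟪p + α • u - o, w⟫ = 0 := by
    intro w hw
    rcases eq_or_ne w 0 with rfl | hw0
    · simp
    set e : E3 := (‖w‖⁻¹ : ℝ) • w with he_def
    have he1 : ‖e‖ = 1 := norm_smul_inv_norm hw0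
    have heu : ⟪u, e⟫ = 0 := by rw [he_def, real_inner_smul_right, hw, mul_zero]
    have hpl := hsub (hmem e heu he1)
    have hmi := hsub (hmem (-e) (show ⟪u, -e⟫ = (0:ℝ) by rw [inner_neg_right, heu, neg_zero]) (by rw [norm_neg, he1]))
    rw [Metric.mem_sphere, dist_eq_norm] at hpl hmi
    have epl : ‖(p + α • u - o) + ρ • e‖ = R := by
      rw [← hpl]; congr 1; abel
    have emi : ‖(p + α • u - o) - ρ • e‖ = R := by
      rw [← hmi]; congr 1; rw [smul_neg]; abel
    have hinner : ⟪p + α • u - o, ρ • e⟫ = 0 :=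
      inner_eq_zero_of_norms _ _ epl emi
    rw [real_inner_smul_right] at hinner
    have hie : ⟪p + α • u - o, e⟫ = 0 := by
      rcases mul_eq_zero.1 hinner with h | h
      · exact absurd h hρ.ne'
      · exact h
    have : ⟪p + α • u - o, w⟫ = ‖w‖ * ⟪p + α • u - o, e⟫ := by
      rw [he_def, real_inner_smul_right]
      have hwn : ‖w‖ ≠ 0 := norm_ne_zero_iff.2 hw0
      field_simp
    rw [this, hie, mul_zero]
  -- hence p + α•u - o lies in the span of u
  have hspan : p + α • u - o ∈ (ℝ ∙ u : Submodule ℝ E3) := by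
    rw [← Submodule.orthogonal_orthogonal (ℝ ∙ u : Submodule ℝ E3)]
    rw [Submodule.mem_orthogonal]
    intro v hv
    rw [Submodule.mem_orthogonal_singleton_iff_inner_right] at hv
    rw [real_inner_comm]
    exact hkey v hv
  obtain ⟨μ, hμ⟩ := Submodule.mem_span_singleton.1 hspan
  have hop : o - p = (α - μ) • u := by
    rw [sub_smul, hμ]; abel
  have hαμ : α - μ ≠ 0 := by
    intro h
    rw [h, zero_smul] at hop
    exact hp (sub_eq_zero.mp hop).symm
  refine ⟨(α - μ)⁻¹, ?_, ?_⟩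
  · rw [hop, smul_smul, inv_mul_cancel₀ hαμ, one_smul, ← hqpu]
  · -- the quadratic equation
    obtain ⟨e0, he0u, he0⟩ := exists_unit_ortho u hu
    have hr0 := hsub (hmem e0 he0u he0)
    rw [Metric.mem_sphere, dist_eq_norm] at hr0
    have hro : p + α • u + ρ • e0 - o = μ • u + ρ • e0 := by
      have : p + α • u + ρ • e0 - o = (p + α • u - o) + ρ • e0 := by abel
      rw [this, hμ]
    rw [hro] at hr0
    have hR2 : R ^ 2 = μ ^ 2 * d ^ 2 + ρ ^ 2 := by
      have : ‖μ • u + ρ • e0‖ ^ 2 = R ^ 2 := by rw [hr0]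
      rw [norm_add_sq_real, real_inner_smul_left, real_inner_smul_right, he0u,
        norm_smul, norm_smul, he0] at this
      simp only [Real.norm_eq_abs, mul_one, mul_zero, mul_pow, sq_abs] at this
      rw [hd_def]
      linarith
    have hD2 : ‖o - p‖ ^ 2 = (α - μ) ^ 2 * d ^ 2 := by
      rw [hop, norm_smul, Real.norm_eq_abs, mul_pow, sq_abs, hd_def]
    clear_value ab bc ca u d s α ρ
    have hab' : ab ≠ 0 := hab.ne'
    have ht : (α - μ)⁻¹ * (α - μ) = 1 := inv_mul_cancel₀ hαμ
    have h2 : ca ^ 2 - bc ^ 2 + ab ^ 2 = 2 * ab ^ 2 * α := by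
      rw [hα_def, mul_comm, div_mul_cancel₀ _ (by positivity : (2 * ab ^ 2 : ℝ) ≠ 0)]
    have hsca : (s * ca) ^ 2 * ab ^ 2 = d ^ 2 * ca ^ 2 := by
      rw [hs_def, div_mul_eq_mul_div, div_pow, div_mul_cancel₀ _ (pow_ne_zero 2 hab')]
      ring
    have hR2' : R ^ 2 * ab ^ 2 = μ ^ 2 * d ^ 2 * ab ^ 2 + d ^ 2 * ca ^ 2 - α ^ 2 * d ^ 2 * ab ^ 2 := by
      rw [hR2, hρ2]
      linear_combination hsca
    exact final_alg ab bc ca d R (‖o - p‖) α μ ((α - μ)⁻¹) h2 hD2 hR2' ht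

/-- For a fixed nondegenerate triangle `abc`, a fixed sphere `σ` with center `o` and
radius `R > 0`, and a fixed point `p ≠ o`, there are at most two circles contained in
`σ` that arise as the similarity locus `γ_{pq}` for some point `q`. -/
theorem at_most_two_cospherical_simLoci (a b c : E3)
    (hΔ : ¬ Collinear ℝ ({a, b, c} : Set E3)) (o : E3) (R : ℝ) (hR : 0 < R)
    (p : E3) (hp : p ≠ o) :
    Set.encard
      {γ : Set E3 | ∃ q : E3, q ≠ p ∧ γ = simLocus a b c p q ∧
        γ ⊆ Metric.sphere o R} ≤ 2 := by
  have hca : (0:ℝ) < dist c a := by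
    rcases eq_or_ne c a with rfl | h
    · refine absurd ?_ hΔ
      have : ({c, b, c} : Set E3) = {c, b} := by ext x; simp; try tauto
      rw [this]; exact collinear_pair ℝ c b
    · exact dist_pos.2 h
  have hD : (0:ℝ) < ‖o - p‖ := norm_pos_iff.2 (sub_ne_zero.2 hp.symm)
  have hA : ‖o - p‖ ^ 2 * (dist c a) ^ 2 ≠ 0 := by positivity
  refine le_trans (Set.encard_le_encard ?_)
    (le_trans (Set.encard_image_le (fun t : ℝ => simLocus a b c p (p + t • (o - p))) _)
      (quad_encard (B := -(‖o - p‖ ^ 2 * ((dist c a) ^ 2 - (dist b c) ^ 2 + (dist a b) ^ 2)))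
        (C := (dist a b) ^ 2 * (‖o - p‖ ^ 2 - R ^ 2)) hA))
  rintro γ ⟨q, hq, rfl, hγ⟩
  obtain ⟨t, ht, htS⟩ := key_quadratic a b c hΔ o R p q hp hq hγ
  exact ⟨t, htS, by show simLocus a b c p (p + t • (o - p)) = simLocus a b c p q; rw [← ht]⟩
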